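/- For every countable type α there exists a function f : α → ℝ such that the map sending each finite multiset M over α to the sum ∑_{x ∈ M} f(x) (summed with multiplicity) is injective on finite multisets. -/

import Mathlib

theorem multiset_sum_embedding_injective (α : Type*) [Countable α] :
    ∃ f : α → ℝ,
      Function.Injective (fun M : Multiset α => (M.map f).sum) := by
  classical
  -- a basis of ℝ over ℚ has an infinite index set
  let ι := Module.Basis.ofVectorSpaceIndex ℚ ℝ
  let b : Module.Basis ι ℚ ℝ := Module.Basis.ofVectorSpace ℚ ℝ
  haveI : Infinite ι := by
    rw [Cardinal.infinite_iff, b.mk_eq_rank'', Real.rank_rat_real]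
    exact Cardinal.aleph0_le_continuum
  obtain ⟨enc, henc⟩ := Countable.exists_injective_nat α
  let e2 := Infinite.natEmbedding ι
  let g : α → ι := fun a => e2 (enc a)
  have hg : Function.Injective g := e2.injective.comp henc
  refine ⟨fun a => b (g a), ?_⟩
  have li : LinearIndependent ℚ (fun a => b (g a)) := b.linearIndependent.comp g hg
  -- the sum over a multiset is a linear combination with ℕ (≤ℚ) coefficients
  have key : ∀ M : Multiset α,
      (M.map fun a => b (g a)).sum =
        Finsupp.linearCombination ℚ (fun a => b (g a))
          (Finsupp.mapRange (Nat.cast : ℕ → ℚ) Nat.cast_zero M.toFinsupp) := by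
    intro M
    induction M using Multiset.induction_on with
    | empty => simp
    | cons a M ih =>
      rw [Multiset.map_cons, Multiset.sum_cons, ih,
        show (a ::ₘ M : Multiset α) = {a} + M by simp,
        Multiset.toFinsupp_add, Multiset.toFinsupp_singleton,
        Finsupp.mapRange_add Nat.cast_add,
        map_add, Finsupp.mapRange_single, Nat.cast_one,
        Finsupp.linearCombination_single, one_smul]
  intro M N h
  simp only [key] at h
  have h2 := li h
  have h3 : M.toFinsupp = N.toFinsupp := by
    ext a
    have := congrArg (fun F => F a) h2
    simpa using this
  exact Multiset.toFinsupp.injective h3
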